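/- Let a parity game be given, let f be a memoryless winning strategy for Player 0 from a vertex v, let π be a play from v conforming to f, and let v' = π(i) be a vertex occurring in π. Then f is a winning strategy for Player 0 from v'. -/

import Mathlib

/-- A parity game: vertices `V`, each owned by Player `0` or Player `1`,
an edge relation `E`, and a priority function `prio` with finite range. -/
structure ParityGame (V : Type*) where
  owner : V → Fin 2
  E : V → V → Prop
  prio : V → ℕ
  finRange : (Set.range prio).Finite

namespace ParityGame

variable {V : Type*} (G : ParityGame V)

/-- A dead end: a vertex without `E`-successor. -/
def DeadEnd (v : V) : Prop := ∀ w, ¬ G.E v w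

/-- `π : ℕ → V` is an infinite play (all consecutive steps are edges). -/
def InfPlay (π : ℕ → V) : Prop := ∀ i, G.E (π i) (π (i + 1))

/-- The set of priorities occurring infinitely often along an infinite play. -/
def InfOften (π : ℕ → V) : Set ℕ := {c | ∀ N, ∃ n, N ≤ n ∧ G.prio (π n) = c}

/-- An infinite play is won by Player `0` iff the maximum priority occurring
infinitely often is even (max-parity condition). -/
def WinInf (π : ℕ → V) : Prop := Even (sSup (G.InfOften π))

/-- `l` is a finite play from `v`: a nonempty list starting at `v`, with
consecutive `E`-edges, whose last vertex is a dead end. -/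
def FinPlay (v : V) (l : List V) : Prop :=
  l.head? = some v ∧ l.Chain' G.E ∧ ∀ x ∈ l.getLast?, G.DeadEnd x

/-- A finite play is won by Player `0` iff its last vertex belongs to Player `1`. -/
def WinFin (l : List V) : Prop := ∀ x ∈ l.getLast?, G.owner x = 1

/-- A strategy (for Player `0`) is valid if it assigns to every finite nonempty
`E`-path ending in a Player-`0` vertex that is not a dead end an `E`-successor
of that vertex. -/
def ValidStrat (σ : List V → V) : Prop :=
  ∀ (l : List V) (x : V), l.Chain' G.E → l.getLast? = some x →
    G.owner x = 0 → ¬ G.DeadEnd x → G.E x (σ l)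

/-- An infinite play conforms to a strategy `σ` if every step taken from a
Player-`0` vertex follows `σ` applied to the path traversed so far. -/
def ConformsInf (σ : List V → V) (π : ℕ → V) : Prop :=
  ∀ i, G.owner (π i) = 0 → π (i + 1) = σ (List.ofFn fun j : Fin (i + 1) => π j)

/-- A finite play conforms to a strategy `σ` if every step taken from a
Player-`0` vertex follows `σ` applied to the path traversed so far. -/
def ConformsFin (σ : List V → V) (l : List V) : Prop :=
  ∀ (i : ℕ) (h : i + 1 < l.length),
    G.owner (l.get ⟨i, Nat.lt_of_succ_lt h⟩) = 0 →
    l.get ⟨i + 1, h⟩ = σ (l.take (i + 1))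

/-- `σ` is a winning strategy for Player `0` from `v`: it is a valid strategy
and every (infinite or finite) play from `v` conforming to it is won by
Player `0`. -/
def WinningFrom (σ : List V → V) (v : V) : Prop :=
  G.ValidStrat σ ∧
    (∀ π : ℕ → V, π 0 = v → G.InfPlay π → G.ConformsInf σ π → G.WinInf π) ∧
    (∀ l : List V, G.FinPlay v l → G.ConformsFin σ l → G.WinFin l)

/-- Player `0` wins the game from `v` if some strategy is winning for
Player `0` from `v`. -/
def Wins0 (v : V) : Prop := ∃ σ : List V → V, G.WinningFrom σ v

/-- A strategy is memoryless if its value depends only on the last vertex of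
the path. -/
def Memoryless (σ : List V → V) : Prop :=
  ∀ (l l' : List V) (x : V), l.getLast? = some x → l'.getLast? = some x → σ l = σ l'


variable {V' : Type*} (G' : ParityGame V')

lemma take_getLast? (l : List V') (i : ℕ) (h : i < l.length) :
    (l.take (i+1)).getLast? = some l[i] := by
  rw [List.getLast?_eq_getElem?]
  simp [Nat.min_eq_left h, List.getElem?_take]

lemma ofFn_getLast? (π : ℕ → V') (n : ℕ) :
    (List.ofFn fun j : Fin (n+1) => π j).getLast? = some (π n) := by
  rw [List.getLast?_eq_getElem?]
  rw [show ((List.ofFn fun j : Fin (n+1) => π j).length - 1) = n by simp]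
  rw [List.getElem?_eq_getElem (by simp), List.getElem_ofFn]

/-- Pointwise characterization of infinite conformance for memoryless strategies. -/
lemma conformsInf_iff (σ : List V' → V') (hml : Memoryless σ) (π : ℕ → V') :
    G'.ConformsInf σ π ↔ ∀ n, G'.owner (π n) = 0 → π (n+1) = σ [π n] := by
  constructor
  · intro h n hn
    rw [h n hn]
    exact hml _ _ _ (ofFn_getLast? π n) (by simp)
  · intro h n hn
    rw [h n hn]
    exact (hml _ _ _ (ofFn_getLast? π n) (by simp)).symm

/-- Pointwise characterization of finite conformance for memoryless strategies. -/
lemma conformsFin_iff (σ : List V' → V') (hml : Memoryless σ) (l : List V') :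
    G'.ConformsFin σ l ↔ ∀ (j : ℕ) (x y : V'), l[j]? = some x → l[j+1]? = some y →
      G'.owner x = 0 → y = σ [x] := by
  constructor
  · intro h j x y hx hy hw
    have hj1 : j + 1 < l.length := (List.getElem?_eq_some_iff.mp hy).1
    have hj : j < l.length := Nat.lt_of_succ_lt hj1
    rw [List.getElem?_eq_getElem hj] at hx
    rw [List.getElem?_eq_getElem hj1] at hy
    obtain rfl : l[j] = x := by injection hx
    obtain rfl : l[j+1] = y := by injection hy
    have := h j hj1 (by simpa using hw)
    simp only [List.get_eq_getElem] at this
    rw [this]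
    exact hml _ _ _ (take_getLast? l j hj) (by simp)
  · intro h j hj hw
    have := h j (l.get ⟨j, Nat.lt_of_succ_lt hj⟩) (l.get ⟨j+1, hj⟩)
      (by simp [List.getElem?_eq_getElem (Nat.lt_of_succ_lt hj)])
      (by simp [List.getElem?_eq_getElem hj]) (by simpa using hw)
    rw [this]
    exact (hml _ _ _ (take_getLast? l j (Nat.lt_of_succ_lt hj)) (by simp)).symm


end ParityGame

/-- If `σ` is a memoryless winning strategy for Player `0` from `v`, `π` is an
infinite play from `v` conforming to `σ`, and `v' = π i` occurs in `π`, then `σ`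
is a winning strategy for Player `0` from `v'`. -/
theorem ParityGame.winningFrom_of_memoryless_of_play {V : Type*} (G : ParityGame V)
    (σ : List V → V) (v : V) (hml : ParityGame.Memoryless σ)
    (hwin : G.WinningFrom σ v) (π : ℕ → V) (hstart : π 0 = v)
    (hplay : G.InfPlay π) (hconf : G.ConformsInf σ π) (i : ℕ) (v' : V)
    (hv' : v' = π i) : G.WinningFrom σ v' := by
  subst hv'
  obtain ⟨hvalid, hinf, hfin⟩ := hwin
  have hπpt := (G.conformsInf_iff σ hml π).mp hconf
  refine ⟨hvalid, ?_, ?_⟩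
  · -- infinite plays
    intro ρ hρ0 hρplay hρconf
    classical
    set τ : ℕ → V := fun n => if n < i then π n else ρ (n - i) with hτdef
    have hτle : ∀ n, n ≤ i → τ n = π n := by
      intro n hn
      rcases lt_or_eq_of_le hn with h | h
      · simp [hτdef, h]
      · subst h
        simp [hτdef, hρ0]
    have hτge : ∀ n, i ≤ n → τ n = ρ (n - i) := by
      intro n hn
      simp [hτdef, Nat.not_lt.mpr hn]
    have hτplay : G.InfPlay τ := by
      intro n
      rcases Nat.lt_or_ge n i with h | h
      · rw [hτle n (le_of_lt h), hτle (n+1) h]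
        exact hplay n
      · rw [hτge n h, hτge (n+1) (le_trans h (Nat.le_succ n)), Nat.succ_sub h]
        exact hρplay (n - i)
    have hρpt := (G.conformsInf_iff σ hml ρ).mp hρconf
    have hτconf : G.ConformsInf σ τ := by
      rw [G.conformsInf_iff σ hml]
      intro n hw
      rcases Nat.lt_or_ge n i with h | h
      · rw [hτle n (le_of_lt h)] at hw ⊢
        rw [hτle (n+1) h]
        exact hπpt n hw
      · rw [hτge n h] at hw ⊢
        rw [hτge (n+1) (le_trans h (Nat.le_succ n)), Nat.succ_sub h]
        exact hρpt (n - i) hw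
    have hτ0 : τ 0 = v := by
      rw [hτle 0 (Nat.zero_le i), hstart]
    have hwinτ := hinf τ hτ0 hτplay hτconf
    have hset : G.InfOften ρ = G.InfOften τ := by
      ext c
      constructor
      · intro hc N
        obtain ⟨n, hn, hcn⟩ := hc N
        refine ⟨n + i, le_trans hn (Nat.le_add_right n i), ?_⟩
        rw [hτge (n + i) (Nat.le_add_left i n), Nat.add_sub_cancel]
        exact hcn
      · intro hc N
        obtain ⟨n, hn, hcn⟩ := hc (N + i)
        have hni : i ≤ n := le_trans (Nat.le_add_left i N) hn
        refine ⟨n - i, by omega, ?_⟩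
        rwa [hτge n hni] at hcn
    unfold WinInf
    rw [hset]
    exact hwinτ
  · -- finite plays
    intro l hlplay hlconf
    obtain ⟨hhead, hchain, hdead⟩ := hlplay
    cases l with
    | nil => simp at hhead
    | cons a t =>
      obtain rfl : a = π i := by simpa using hhead
      cases i with
      | zero =>
        exact hfin (π 0 :: t) ⟨by simp [hstart], hchain, hdead⟩ hlconf
      | succ k =>
        have hlpt := (G.conformsFin_iff σ hml (π (k+1) :: t)).mp hlconf
        set P : List V := List.ofFn fun j : Fin (k+1) => π j with hP
        set L : List V := P ++ (π (k+1) :: t) with hL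
        have hPlen : P.length = k + 1 := by simp [hP]
        have hLlo : ∀ j : ℕ, j < k + 1 → L[j]? = some (π j) := by
          intro j h
          rw [hL, List.getElem?_append_left (by omega)]
          rw [hP, List.getElem?_eq_getElem (by simpa using h), List.getElem_ofFn]
        have hLhi : ∀ j : ℕ, k + 1 ≤ j → L[j]? = (π (k+1) :: t)[j - (k+1)]? := by
          intro j h
          rw [hL, List.getElem?_append_right (by omega), hPlen]
        have hheadL : L.head? = some v := by
          rw [hL, List.head?_append, hP, List.ofFn_succ]
          simp [hstart]
        have hchainP : P.Chain' G.E := by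
          unfold List.Chain'
          rw [hP, List.isChain_iff_getElem]
          intro j hj
          simp only [List.get_eq_getElem, List.getElem_ofFn]
          exact hplay j
        have hchainL : L.Chain' G.E := by
          unfold List.Chain'
          rw [hL, List.isChain_append]
          refine ⟨hchainP, hchain, ?_⟩
          intro x hx y hy
          rw [hP, ofFn_getLast? π k] at hx
          simp only [Option.mem_def, Option.some.injEq, List.head?_cons] at hx hy
          rw [← hx, ← hy]
          exact hplay k
        have hlastL : L.getLast? = (π (k+1) :: t).getLast? := by
          rw [hL, List.getLast?_append_cons]
        have hconfL : G.ConformsFin σ L := by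
          rw [G.conformsFin_iff σ hml]
          intro j x y hx hy hw
          rcases Nat.lt_or_ge (j+1) (k+1) with h | h
          · rw [hLlo j (by omega)] at hx
            rw [hLlo (j+1) h] at hy
            obtain rfl : π j = x := by injection hx
            obtain rfl : π (j+1) = y := by injection hy
            exact hπpt j hw
          · rcases Nat.lt_or_ge j (k+1) with h2 | h2
            · have hjk : j = k := by omega
              rw [hjk] at hx hy
              rw [hLlo k (by omega)] at hx
              rw [hLhi (k+1) (le_refl _), Nat.sub_self] at hy
              obtain rfl : π k = x := by injection hx
              simp only [List.getElem?_cons_zero, Option.some.injEq] at hy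
              subst hy
              exact hπpt k hw
            · rw [hLhi j h2] at hx
              rw [hLhi (j+1) (by omega), show j + 1 - (k+1) = (j - (k+1)) + 1 by omega] at hy
              exact hlpt (j - (k+1)) x y hx hy hw
        have hwinL := hfin L ⟨hheadL, hchainL, fun x hx => hdead x (hlastL ▸ hx)⟩ hconfL
        intro x hx
        exact hwinL x (hlastL ▸ hx)
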